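/- The fixed points of the S_n-action τ·(σ,d) = (τστ^{-1}, τ(d)) on B_n form a subalgebra A_n of B_n, and for any symmetric polynomial f in n variables, f(ξ_1,…,ξ_n) belongs to A_n. -/

import Mathlib

abbrev PPn (n : ℕ) : Type := {p : Equiv.Perm (Fin n) × Finset (Fin n) // ∀ x ∉ p.2, p.1 x = x}

instance (n : ℕ) : Monoid (PPn n) where
  mul p q := ⟨(p.1.1 * q.1.1, p.1.2 ∪ q.1.2), by
    intro x hx
    simp only [Finset.mem_union, not_or] at hx
    simp [Equiv.Perm.mul_apply, q.2 x hx.2, p.2 x hx.1]⟩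
  one := ⟨(1, ∅), fun x _ => rfl⟩
  mul_assoc p q r := Subtype.ext (Prod.ext (mul_assoc _ _ _) (Finset.union_assoc _ _ _))
  one_mul p := Subtype.ext (Prod.ext (one_mul _) (Finset.empty_union _))
  mul_one p := Subtype.ext (Prod.ext (mul_one _) (Finset.union_empty _))

abbrev Bn (n : ℕ) : Type := MonoidAlgebra ℚ (PPn n)

def ppSwap {n : ℕ} (j i : Fin n) : PPn n := ⟨(Equiv.swap j i, {j, i}), by
  intro x hx
  simp only [Finset.mem_insert, Finset.mem_singleton, not_or] at hx
  exact Equiv.swap_apply_of_ne_of_ne hx.1 hx.2⟩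

noncomputable def xi (n : ℕ) (i : Fin n) : Bn n :=
  ∑ j ∈ Finset.univ.filter (· < i), MonoidAlgebra.of ℚ (PPn n) (ppSwap j i)

/-- The action of `τ ∈ S_n` on partial permutations: `τ·(σ,d) = (τστ⁻¹, τ(d))`. -/
def conjPP {n : ℕ} (τ : Equiv.Perm (Fin n)) (p : PPn n) : PPn n :=
  ⟨(τ * p.1.1 * τ⁻¹, p.1.2.image τ), by
    intro x hx
    have hx' : τ⁻¹ x ∉ p.1.2 := fun h => hx (Finset.mem_image.mpr ⟨_, h, by simp⟩)
    simpa [Equiv.Perm.mul_apply] using congrArg τ (p.2 _ hx')⟩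

/-- Evaluation of a polynomial in `n` variables at the (commuting) partial Jucys-Murphy
elements, the monomials being evaluated as products in increasing order of the variables. -/
noncomputable def evalXi (n : ℕ) (f : MvPolynomial (Fin n) ℚ) : Bn n :=
  ∑ m ∈ f.support, f.coeff m • ((List.finRange n).map fun i => xi n i ^ m i).prod

/- ## Auxiliary lemmas -/

lemma PPn.mul_val {n : ℕ} (p q : PPn n) :
    (p * q).1 = (p.1.1 * q.1.1, p.1.2 ∪ q.1.2) := rfl

lemma ppSwap_comm {n : ℕ} (j i : Fin n) : ppSwap j i = ppSwap i j :=
  Subtype.ext (Prod.ext (Equiv.swap_comm j i) (Finset.pair_comm j i))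

lemma ppSwap_mul_ppSwap {n : ℕ} (j c l s : Fin n) :
    ppSwap j c * ppSwap l s
      = ppSwap (Equiv.swap j c l) (Equiv.swap j c s) * ppSwap j c := by
  apply Subtype.ext
  apply Prod.ext
  · show Equiv.swap j c * Equiv.swap l s
      = Equiv.swap (Equiv.swap j c l) (Equiv.swap j c s) * Equiv.swap j c
    rw [Equiv.swap_apply_apply]
    simp [mul_assoc]
  · show ({j, c} ∪ {l, s} : Finset (Fin n))
      = {Equiv.swap j c l, Equiv.swap j c s} ∪ {j, c}
    ext x
    simp only [Finset.mem_union, Finset.mem_insert, Finset.mem_singleton]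
    simp only [Equiv.swap_apply_def]
    split_ifs <;> subst_eqs <;> constructor <;> tauto

def conjHom {n : ℕ} (τ : Equiv.Perm (Fin n)) : PPn n →* PPn n where
  toFun := conjPP τ
  map_one' := by
    apply Subtype.ext
    apply Prod.ext
    · show τ * 1 * τ⁻¹ = 1
      group
    · show Finset.image τ ∅ = ∅
      simp
  map_mul' p q := by
    apply Subtype.ext
    apply Prod.ext
    · show τ * (p.1.1 * q.1.1) * τ⁻¹ = (τ * p.1.1 * τ⁻¹) * (τ * q.1.1 * τ⁻¹)
      group
    · show Finset.image τ (p.1.2 ∪ q.1.2) = p.1.2.image τ ∪ q.1.2.image τ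
      exact Finset.image_union _ _

noncomputable def Phi {n : ℕ} (τ : Equiv.Perm (Fin n)) : Bn n →ₐ[ℚ] Bn n :=
  MonoidAlgebra.mapDomainAlgHom ℚ ℚ (conjHom τ)

lemma Phi_apply {n : ℕ} (τ : Equiv.Perm (Fin n)) (x : Bn n) :
    Phi τ x = MonoidAlgebra.mapDomain (conjPP τ) x := rfl

lemma Phi_of {n : ℕ} (τ : Equiv.Perm (Fin n)) (p : PPn n) :
    Phi τ (MonoidAlgebra.of ℚ (PPn n) p) = MonoidAlgebra.of ℚ (PPn n) (conjPP τ p) := by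
  rw [Phi_apply]
  exact MonoidAlgebra.mapDomain_single

lemma Phi_one {n : ℕ} : Phi (n := n) 1 = AlgHom.id ℚ (Bn n) := by
  have : conjHom (n := n) 1 = MonoidHom.id (PPn n) := by
    apply MonoidHom.ext; intro p
    apply Subtype.ext
    apply Prod.ext
    · show 1 * p.1.1 * 1⁻¹ = p.1.1
      group
    · show p.1.2.image (1 : Equiv.Perm (Fin n)) = p.1.2
      simp
  rw [Phi, this, MonoidAlgebra.mapDomainAlgHom_id]

lemma Phi_mul {n : ℕ} (σ τ : Equiv.Perm (Fin n)) (x : Bn n) :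
    Phi (σ * τ) x = Phi σ (Phi τ x) := by
  have : conjHom (σ * τ) = (conjHom σ).comp (conjHom τ) := by
    apply MonoidHom.ext; intro p
    apply Subtype.ext
    apply Prod.ext
    · show (σ * τ) * p.1.1 * (σ * τ)⁻¹ = σ * (τ * p.1.1 * τ⁻¹) * σ⁻¹
      group
    · show p.1.2.image (σ * τ) = (p.1.2.image τ).image σ
      rw [Finset.image_image]
      rfl
  rw [Phi, this, MonoidAlgebra.mapDomainAlgHom_comp]
  rfl

lemma conjPP_ppSwap {n : ℕ} (τ : Equiv.Perm (Fin n)) (j i : Fin n) :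
    conjPP τ (ppSwap j i) = ppSwap (τ j) (τ i) := by
  apply Subtype.ext
  apply Prod.ext
  · show τ * Equiv.swap j i * τ⁻¹ = Equiv.swap (τ j) (τ i)
    rw [Equiv.swap_apply_apply]
  · show Finset.image τ {j, i} = {τ j, τ i}
    simp

section PairLemma

variable {R : Type*} [Ring R]

lemma powsum_eq (A B a b : R) (hAB : A * B = B * A) (hab : a * b = b * a)
    (h1 : A + B = a + b) (h2 : A * B = a * b) : ∀ r : ℕ, A ^ r + B ^ r = a ^ r + b ^ r := by
  have key : ∀ A B : R, A * B = B * A → ∀ r : ℕ,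
      A ^ (r + 2) + B ^ (r + 2)
        = (A + B) * (A ^ (r + 1) + B ^ (r + 1)) - (A * B) * (A ^ r + B ^ r) := by
    intro A B h r
    have e1 : B * A ^ (r + 1) = A * B * A ^ r := by
      rw [pow_succ', ← mul_assoc, ← h]
    have e2 : A * B ^ (r + 1) = A * B * B ^ r := by
      rw [pow_succ', ← mul_assoc]
    have p1 : A * A ^ (r + 1) = A ^ (r + 2) := (pow_succ' A (r + 1)).symm
    have p2 : B * B ^ (r + 1) = B ^ (r + 2) := (pow_succ' B (r + 1)).symm
    rw [add_mul, mul_add, mul_add, mul_add, e1, e2, p1, p2]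
    abel
  intro r
  induction r using Nat.strong_induction_on with
  | _ r ih =>
    rcases r with _ | _ | r
    · simp
    · simpa using h1
    · rw [key A B hAB r, key a b hab r, ih (r + 1) (by omega), ih r (by omega), h1, h2]

lemma pair_eq (A B a b : R) (hAB : A * B = B * A) (hab : a * b = b * a)
    (h1 : A + B = a + b) (h2 : A * B = a * b) (p q : ℕ) :
    A ^ p * B ^ q + A ^ q * B ^ p = a ^ p * b ^ q + a ^ q * b ^ p := by
  have hs := powsum_eq A B a b hAB hab h1 h2
  have hABc : Commute A B := hAB
  have habc : Commute a b := hab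
  have main : ∀ p q : ℕ, q ≤ p →
      A ^ p * B ^ q + A ^ q * B ^ p = a ^ p * b ^ q + a ^ q * b ^ p := by
    intro p q hqp
    obtain ⟨d, rfl⟩ : ∃ d, p = q + d := ⟨p - q, by omega⟩
    have factor : ∀ X Y : R, Commute X Y →
        X ^ (q + d) * Y ^ q + X ^ q * Y ^ (q + d) = X ^ q * Y ^ q * (X ^ d + Y ^ d) := by
      intro X Y hXY
      rw [pow_add, pow_add, mul_add]
      congr 1
      · rw [mul_assoc, mul_assoc]
        congr 1
        exact (hXY.pow_pow d q).eq
      · rw [mul_assoc]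
    rw [factor A B hABc, factor a b habc]
    rw [← hABc.mul_pow, ← habc.mul_pow, h2, hs d]
  rcases le_total q p with h | h
  · exact main p q h
  · rw [add_comm (A ^ p * B ^ q), add_comm (a ^ p * b ^ q)]
    exact main q p h

end PairLemma

/- ## Computations with `xi` -/

lemma swap_lt_iff {n : ℕ} {j c s : Fin n} (hj : j < s) (hc : c < s) (l : Fin n) :
    Equiv.swap j c l < s ↔ l < s := by
  rcases eq_or_ne l j with rfl | h1
  · rw [Equiv.swap_apply_left]; exact ⟨fun _ => hj, fun _ => hc⟩
  rcases eq_or_ne l c with rfl | h2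
  · rw [Equiv.swap_apply_right]; exact ⟨fun _ => hc, fun _ => hj⟩
  · rw [Equiv.swap_apply_of_ne_of_ne h1 h2]

lemma xi_commute {n : ℕ} {c s : Fin n} (hcs : c < s) :
    xi n c * xi n s = xi n s * xi n c := by
  unfold xi
  rw [Finset.sum_mul_sum, Finset.sum_mul_sum]
  conv_rhs => rw [Finset.sum_comm]
  refine Finset.sum_congr rfl ?_
  intro j hj
  have hjc : j < c := by simpa using hj
  have hjs : j < s := hjc.trans hcs
  have hcs' : c ≠ s := hcs.ne
  calc ∑ l ∈ Finset.univ.filter (· < s),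
        MonoidAlgebra.of ℚ (PPn n) (ppSwap j c) * MonoidAlgebra.of ℚ (PPn n) (ppSwap l s)
      = ∑ l ∈ Finset.univ.filter (· < s),
          MonoidAlgebra.of ℚ (PPn n) (ppSwap (Equiv.swap j c l) s * ppSwap j c) := by
        refine Finset.sum_congr rfl fun l _ => ?_
        rw [← map_mul, ppSwap_mul_ppSwap, Equiv.swap_apply_of_ne_of_ne hjs.ne' hcs.ne']
    _ = ∑ l ∈ Finset.univ.filter (· < s),
          MonoidAlgebra.of ℚ (PPn n) (ppSwap l s * ppSwap j c) := by
        refine Finset.sum_equiv (Equiv.swap j c) (fun l => ?_) (fun l _ => rfl)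
        simp only [Finset.mem_filter, Finset.mem_univ, true_and]
        exact (swap_lt_iff hjs hcs l).symm
    _ = ∑ l ∈ Finset.univ.filter (· < s),
          MonoidAlgebra.of ℚ (PPn n) (ppSwap l s) * MonoidAlgebra.of ℚ (PPn n) (ppSwap j c) := by
        refine Finset.sum_congr rfl fun l _ => ?_
        rw [map_mul]

lemma filter_lt_succ {m : ℕ} (k : Fin m) :
    Finset.univ.filter (· < k.succ)
      = insert k.castSucc (Finset.univ.filter (· < (k.castSucc : Fin (m+1)))) := by
  ext j
  simp only [Finset.mem_filter, Finset.mem_univ, true_and, Finset.mem_insert,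
    Fin.lt_def, Fin.ext_iff, Fin.val_succ, Fin.coe_castSucc]
  omega

lemma castSucc_not_mem {m : ℕ} (k : Fin m) :
    (k.castSucc : Fin (m+1)) ∉ Finset.univ.filter (· < (k.castSucc : Fin (m+1))) := by
  simp

lemma xi_succ_mul_T {m : ℕ} (k : Fin m) :
    xi (m+1) k.succ * MonoidAlgebra.of ℚ (PPn (m+1)) (ppSwap k.castSucc k.succ)
      = MonoidAlgebra.of ℚ (PPn (m+1)) (ppSwap k.castSucc k.succ) * xi (m+1) k.castSucc
        + MonoidAlgebra.of ℚ (PPn (m+1)) (ppSwap k.castSucc k.succ)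
          * MonoidAlgebra.of ℚ (PPn (m+1)) (ppSwap k.castSucc k.succ) := by
  have hck : (k.castSucc : Fin (m+1)) < k.succ := Fin.castSucc_lt_succ
  rw [xi, filter_lt_succ k, Finset.sum_insert (castSucc_not_mem k), add_mul]
  conv_rhs => rw [add_comm]
  congr 1
  rw [Finset.sum_mul, xi, Finset.mul_sum]
  refine Finset.sum_congr rfl fun j hj => ?_
  have hjc : j < k.castSucc := by simpa using hj
  rw [← map_mul, ← map_mul]
  congr 1
  conv_rhs => rw [ppSwap_mul_ppSwap,
    Equiv.swap_apply_of_ne_of_ne hjc.ne (hjc.trans hck).ne, Equiv.swap_apply_left]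

lemma Phi_xi {n : ℕ} (τ : Equiv.Perm (Fin n)) (i : Fin n) :
    Phi τ (xi n i) = ∑ j ∈ Finset.univ.filter (· < i),
      MonoidAlgebra.of ℚ (PPn n) (ppSwap (τ j) (τ i)) := by
  unfold xi
  rw [map_sum]
  exact Finset.sum_congr rfl fun j _ => by rw [Phi_of, conjPP_ppSwap]

lemma Phi_swap_xi_other {m : ℕ} (k : Fin m) (i : Fin (m+1))
    (h1 : i ≠ k.castSucc) (h2 : i ≠ k.succ) :
    Phi (Equiv.swap k.castSucc k.succ) (xi (m+1) i) = xi (m+1) i := by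
  rw [Phi_xi, Equiv.swap_apply_of_ne_of_ne h1 h2]
  have hik : (i : ℕ) ≠ (k : ℕ) := fun h => h1 (Fin.ext h)
  have hik1 : (i : ℕ) ≠ (k : ℕ) + 1 := fun h => h2 (Fin.ext h)
  have key : ∀ j : Fin (m+1), j < i ↔ Equiv.swap k.castSucc k.succ j < i := by
    intro j
    rcases eq_or_ne j k.castSucc with rfl | hj1
    · rw [Equiv.swap_apply_left]
      simp only [Fin.lt_def, Fin.coe_castSucc, Fin.val_succ]
      omega
    rcases eq_or_ne j k.succ with rfl | hj2
    · rw [Equiv.swap_apply_right]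
      simp only [Fin.lt_def, Fin.coe_castSucc, Fin.val_succ]
      omega
    · rw [Equiv.swap_apply_of_ne_of_ne hj1 hj2]
  unfold xi
  refine Finset.sum_equiv (Equiv.swap k.castSucc k.succ) (fun j => ?_) (fun j _ => rfl)
  simp only [Finset.mem_filter, Finset.mem_univ, true_and]
  exact key j

lemma Phi_swap_xi_cast {m : ℕ} (k : Fin m) :
    Phi (Equiv.swap k.castSucc k.succ) (xi (m+1) k.castSucc)
      = xi (m+1) k.succ - MonoidAlgebra.of ℚ (PPn (m+1)) (ppSwap k.castSucc k.succ) := by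
  have hck : (k.castSucc : Fin (m+1)) < k.succ := Fin.castSucc_lt_succ
  rw [Phi_xi, Equiv.swap_apply_left, eq_sub_iff_add_eq]
  conv_rhs => rw [xi, filter_lt_succ k, Finset.sum_insert (castSucc_not_mem k)]
  have hsum : ∑ j ∈ Finset.univ.filter (· < (k.castSucc : Fin (m+1))),
      MonoidAlgebra.of ℚ (PPn (m+1)) (ppSwap (Equiv.swap k.castSucc k.succ j) k.succ)
      = ∑ j ∈ Finset.univ.filter (· < (k.castSucc : Fin (m+1))),
        MonoidAlgebra.of ℚ (PPn (m+1)) (ppSwap j k.succ) := by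
    refine Finset.sum_congr rfl fun j hj => ?_
    have hjc : j < k.castSucc := by simpa using hj
    rw [Equiv.swap_apply_of_ne_of_ne hjc.ne (hjc.trans hck).ne]
  rw [hsum]
  exact add_comm _ _

lemma Phi_swap_xi_succ {m : ℕ} (k : Fin m) :
    Phi (Equiv.swap k.castSucc k.succ) (xi (m+1) k.succ)
      = xi (m+1) k.castSucc + MonoidAlgebra.of ℚ (PPn (m+1)) (ppSwap k.castSucc k.succ) := by
  have hck : (k.castSucc : Fin (m+1)) < k.succ := Fin.castSucc_lt_succ
  rw [Phi_xi, Equiv.swap_apply_right, filter_lt_succ k,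
    Finset.sum_insert (castSucc_not_mem k), Equiv.swap_apply_left]
  have hsum : ∑ j ∈ Finset.univ.filter (· < (k.castSucc : Fin (m+1))),
      MonoidAlgebra.of ℚ (PPn (m+1)) (ppSwap (Equiv.swap k.castSucc k.succ j) k.castSucc)
      = xi (m+1) k.castSucc := by
    rw [xi]
    refine Finset.sum_congr rfl fun j hj => ?_
    have hjc : j < k.castSucc := by simpa using hj
    rw [Equiv.swap_apply_of_ne_of_ne hjc.ne (hjc.trans hck).ne]
  rw [hsum, ppSwap_comm k.succ k.castSucc]
  exact add_comm _ _

/- ## List splitting -/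

lemma finRange_split_castSucc {m : ℕ} (k : Fin m) :
    List.finRange (m+1) = (List.finRange (m+1)).take (k : ℕ)
      ++ (k.castSucc : Fin (m+1)) :: k.succ :: (List.finRange (m+1)).drop ((k : ℕ)+2) := by
  have hlen : (List.finRange (m+1)).length = m+1 := List.length_finRange
  have hk : (k : ℕ) < m := k.isLt
  conv_lhs => rw [← List.take_append_drop (k : ℕ) (List.finRange (m+1))]
  congr 1
  rw [List.drop_eq_getElem_cons (by omega)]
  congr 1
  · rw [List.getElem_finRange]
    exact Fin.ext rfl
  rw [List.drop_eq_getElem_cons (by omega)]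
  congr 1
  · rw [List.getElem_finRange]
    exact Fin.ext rfl

lemma mem_take_lt {n k : ℕ} {i : Fin n} (hi : i ∈ (List.finRange n).take k) : (i : ℕ) < k := by
  obtain ⟨idx, hidx, hval⟩ := List.mem_iff_getElem.mp hi
  have h1 : idx < k := by
    simp only [List.length_take, List.length_finRange, lt_min_iff] at hidx
    exact hidx.1
  have h2 : (i : ℕ) = idx := by
    rw [← hval, List.getElem_take, List.getElem_finRange]
    rfl
  omega

lemma mem_drop_ge {n k : ℕ} {i : Fin n} (hi : i ∈ (List.finRange n).drop k) : k ≤ (i : ℕ) := by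
  obtain ⟨idx, hidx, hval⟩ := List.mem_iff_getElem.mp hi
  have h2 : (i : ℕ) = k + idx := by
    rw [← hval, List.getElem_drop, List.getElem_finRange]
    rfl
  omega

noncomputable def monProd {n : ℕ} (y : Fin n → Bn n) (μ : Fin n → ℕ) : Bn n :=
  ((List.finRange n).map fun i => y i ^ μ i).prod

lemma monProd_split {m : ℕ} (k : Fin m) (y : Fin (m+1) → Bn (m+1)) (μ : Fin (m+1) → ℕ) :
    monProd y μ = (((List.finRange (m+1)).take (k : ℕ)).map fun i => y i ^ μ i).prod
      * (y k.castSucc ^ μ k.castSucc * (y k.succ ^ μ k.succ *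
        (((List.finRange (m+1)).drop ((k : ℕ)+2)).map fun i => y i ^ μ i).prod)) := by
  rw [monProd]
  conv_lhs => rw [finRange_split_castSucc k]
  rw [List.map_append, List.prod_append, List.map_cons, List.prod_cons, List.map_cons,
    List.prod_cons]

lemma Phi_evalXi {n : ℕ} (τ : Equiv.Perm (Fin n)) (f : MvPolynomial (Fin n) ℚ) :
    Phi τ (evalXi n f)
      = ∑ μ ∈ f.support, f.coeff μ • monProd (fun i => Phi τ (xi n i)) ⇑μ := by
  rw [evalXi, map_sum]
  refine Finset.sum_congr rfl fun μ _ => ?_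
  rw [map_smul]
  congr 1
  rw [map_list_prod, List.map_map, monProd]
  refine congrArg List.prod (List.map_congr_left fun i _ => ?_)
  simp [Function.comp, map_pow]

lemma evalXi_eq_sum_monProd {n : ℕ} (f : MvPolynomial (Fin n) ℚ) :
    evalXi n f = ∑ μ ∈ f.support, f.coeff μ • monProd (xi n) ⇑μ := rfl

lemma sum_reindex {n : ℕ} (f : MvPolynomial (Fin n) ℚ) (hf : f.IsSymmetric)
    (σ : Equiv.Perm (Fin n)) (hinv : ∀ i, σ (σ i) = i) (y : Fin n → Bn n) :
    ∑ μ ∈ f.support, f.coeff μ • monProd y ⇑μ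
      = ∑ μ ∈ f.support, f.coeff μ • monProd y (fun i => μ (σ i)) := by
  conv_lhs => rw [← hf σ]
  rw [MvPolynomial.support_rename_of_injective σ.injective,
    Finset.sum_image (fun x _ y _ h => Finsupp.mapDomain_injective σ.injective h)]
  refine Finset.sum_congr rfl fun μ hμ => ?_
  rw [MvPolynomial.coeff_rename_mapDomain _ σ.injective]
  congr 1
  have : ⇑(Finsupp.mapDomain (⇑σ) μ) = fun i => μ (σ i) := by
    funext i
    conv_lhs => rw [show i = σ (σ i) from (hinv i).symm]
    rw [Finsupp.mapDomain_apply σ.injective]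
  rw [this]

lemma monProd_pair {m : ℕ} (k : Fin m)
    (μ : Fin (m+1) →₀ ℕ) :
    monProd (fun i => Phi (Equiv.swap k.castSucc k.succ) (xi (m+1) i)) ⇑μ
      + monProd (fun i => Phi (Equiv.swap k.castSucc k.succ) (xi (m+1) i))
          (fun i => μ (Equiv.swap k.castSucc k.succ i))
      = monProd (xi (m+1)) ⇑μ
        + monProd (xi (m+1)) (fun i => μ (Equiv.swap k.castSucc k.succ i)) := by
  have hck : (k.castSucc : Fin (m+1)) < k.succ := Fin.castSucc_lt_succ
  set a := xi (m+1) k.castSucc with ha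
  set b := xi (m+1) k.succ with hb
  set T : Bn (m+1) := MonoidAlgebra.of ℚ (PPn (m+1)) (ppSwap k.castSucc k.succ) with hT
  have hab : a * b = b * a := xi_commute hck
  have hbT : b * T = T * a + T * T := xi_succ_mul_T k
  have h1 := Phi_swap_xi_cast k
  have h2 := Phi_swap_xi_succ k
  have hAB : (b - T) * (a + T) = (a + T) * (b - T) := by
    calc (b - T) * (a + T)
        = Phi (Equiv.swap k.castSucc k.succ) a * Phi (Equiv.swap k.castSucc k.succ) b := by
          rw [h1, h2]
      _ = Phi (Equiv.swap k.castSucc k.succ) (a * b) := (map_mul _ _ _).symm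
      _ = Phi (Equiv.swap k.castSucc k.succ) (b * a) := by rw [hab]
      _ = Phi (Equiv.swap k.castSucc k.succ) b * Phi (Equiv.swap k.castSucc k.succ) a :=
          map_mul _ _ _
      _ = (a + T) * (b - T) := by rw [h1, h2]
  have hABab : (b - T) * (a + T) = a * b := by
    rw [sub_mul, mul_add, mul_add, hbT, ← hab]
    abel
  have pair := pair_eq (b - T) (a + T) a b hAB hab (by abel) hABab
  -- now split the products
  have hother : ∀ i : Fin (m+1), (i : ℕ) ≠ (k : ℕ) → (i : ℕ) ≠ (k : ℕ) + 1 →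
      Phi (Equiv.swap k.castSucc k.succ) (xi (m+1) i) = xi (m+1) i := by
    intro i hi1 hi2
    exact Phi_swap_xi_other k i (fun h => hi1 (by rw [h]; rfl)) (fun h => hi2 (by rw [h]; rfl))
  have hfix : ∀ i : Fin (m+1), (i : ℕ) ≠ (k : ℕ) → (i : ℕ) ≠ (k : ℕ) + 1 →
      Equiv.swap k.castSucc k.succ i = i := by
    intro i hi1 hi2
    exact Equiv.swap_apply_of_ne_of_ne (fun h => hi1 (by rw [h]; rfl))
      (fun h => hi2 (by rw [h]; rfl))
  rw [monProd_split k, monProd_split k, monProd_split k, monProd_split k]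
  have htake : ∀ (y : Fin (m+1) → Bn (m+1)) (ν : Fin (m+1) → ℕ),
      (∀ i : Fin (m+1), (i : ℕ) ≠ (k : ℕ) → (i : ℕ) ≠ (k : ℕ) + 1 → y i ^ ν i = xi (m+1) i ^ μ i) →
      (((List.finRange (m+1)).take (k : ℕ)).map fun i => y i ^ ν i).prod
        = (((List.finRange (m+1)).take (k : ℕ)).map fun i => xi (m+1) i ^ μ i).prod := by
    intro y ν h
    refine congrArg List.prod (List.map_congr_left fun i hi => ?_)
    have := mem_take_lt hi
    exact h i (by omega) (by omega)
  have hdrop : ∀ (y : Fin (m+1) → Bn (m+1)) (ν : Fin (m+1) → ℕ),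
      (∀ i : Fin (m+1), (i : ℕ) ≠ (k : ℕ) → (i : ℕ) ≠ (k : ℕ) + 1 → y i ^ ν i = xi (m+1) i ^ μ i) →
      (((List.finRange (m+1)).drop ((k : ℕ)+2)).map fun i => y i ^ ν i).prod
        = (((List.finRange (m+1)).drop ((k : ℕ)+2)).map fun i => xi (m+1) i ^ μ i).prod := by
    intro y ν h
    refine congrArg List.prod (List.map_congr_left fun i hi => ?_)
    have := mem_drop_ge hi
    exact h i (by omega) (by omega)
  have hcond1 : ∀ i : Fin (m+1), (i : ℕ) ≠ (k : ℕ) → (i : ℕ) ≠ (k : ℕ) + 1 →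
      Phi (Equiv.swap k.castSucc k.succ) (xi (m+1) i) ^ μ i = xi (m+1) i ^ μ i := by
    intro i hi1 hi2; rw [hother i hi1 hi2]
  have hcond2 : ∀ i : Fin (m+1), (i : ℕ) ≠ (k : ℕ) → (i : ℕ) ≠ (k : ℕ) + 1 →
      Phi (Equiv.swap k.castSucc k.succ) (xi (m+1) i) ^ μ (Equiv.swap k.castSucc k.succ i)
        = xi (m+1) i ^ μ i := by
    intro i hi1 hi2; rw [hother i hi1 hi2, hfix i hi1 hi2]
  have hcond3 : ∀ i : Fin (m+1), (i : ℕ) ≠ (k : ℕ) → (i : ℕ) ≠ (k : ℕ) + 1 →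
      xi (m+1) i ^ μ (Equiv.swap k.castSucc k.succ i) = xi (m+1) i ^ μ i := by
    intro i hi1 hi2; rw [hfix i hi1 hi2]
  rw [htake _ _ hcond1, htake _ _ hcond2, htake _ _ hcond3,
    hdrop _ _ hcond1, hdrop _ _ hcond2, hdrop _ _ hcond3,
    h1, h2, Equiv.swap_apply_left, Equiv.swap_apply_right]
  set C := (((List.finRange (m+1)).take (k : ℕ)).map fun i => xi (m+1) i ^ μ i).prod
  set D := (((List.finRange (m+1)).drop ((k : ℕ)+2)).map fun i => xi (m+1) i ^ μ i).prod
  set p := μ k.castSucc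
  set q := μ k.succ
  have rearrange : ∀ u v w x : Bn (m+1),
      C * (u * (v * D)) + C * (w * (x * D)) = C * ((u * v + w * x) * D) := by
    intro u v w x
    rw [add_mul, mul_add, mul_assoc u v D, mul_assoc w x D]
  rw [rearrange, rearrange, pair p q]

lemma Phi_swap_evalXi {m : ℕ} (k : Fin m) (f : MvPolynomial (Fin (m+1)) ℚ)
    (hf : f.IsSymmetric) :
    Phi (Equiv.swap k.castSucc k.succ) (evalXi (m+1) f) = evalXi (m+1) f := by
  have hinv : ∀ i, Equiv.swap (k.castSucc : Fin (m+1)) k.succ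
      (Equiv.swap k.castSucc k.succ i) = i := fun i => Equiv.swap_apply_self _ _ _
  set Y : Fin (m+1) → Bn (m+1) := fun i => Phi (Equiv.swap k.castSucc k.succ) (xi (m+1) i)
    with hY
  have main2 : (∑ μ ∈ f.support, f.coeff μ • monProd Y ⇑μ)
        + (∑ μ ∈ f.support, f.coeff μ • monProd Y ⇑μ)
      = (∑ μ ∈ f.support, f.coeff μ • monProd (xi (m+1)) ⇑μ)
        + (∑ μ ∈ f.support, f.coeff μ • monProd (xi (m+1)) ⇑μ) := by
    nth_rewrite 2 [sum_reindex f hf _ hinv Y]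
    nth_rewrite 2 [sum_reindex f hf _ hinv (xi (m+1))]
    rw [← Finset.sum_add_distrib, ← Finset.sum_add_distrib]
    refine Finset.sum_congr rfl fun μ _ => ?_
    rw [← smul_add, ← smul_add, hY]
    exact congrArg _ (monProd_pair k μ)
  have final : (∑ μ ∈ f.support, f.coeff μ • monProd Y ⇑μ)
      = ∑ μ ∈ f.support, f.coeff μ • monProd (xi (m+1)) ⇑μ := by
    have h2 : (2 : ℚ) • (∑ μ ∈ f.support, f.coeff μ • monProd Y ⇑μ)
        = (2 : ℚ) • (∑ μ ∈ f.support, f.coeff μ • monProd (xi (m+1)) ⇑μ) := by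
      rw [two_smul, two_smul]; exact main2
    have := congrArg (fun z => (2 : ℚ)⁻¹ • z) h2
    simpa [smul_smul] using this
  rw [Phi_evalXi, evalXi_eq_sum_monProd]
  exact final

/-- the fixed points of the `S_n`-action on `B_n` form a subalgebra `A_n`,
and every symmetric polynomial in the partial Jucys-Murphy elements belongs to it. -/
theorem fixed_points_subalgebra_and_symmetric_JM (n : ℕ) :
    ∃ S : Subalgebra ℚ (Bn n),
      (S : Set (Bn n)) = {x | ∀ τ : Equiv.Perm (Fin n), Finsupp.mapDomain (conjPP τ) x.coeff = x.coeff} ∧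
      ∀ f : MvPolynomial (Fin n) ℚ, f.IsSymmetric → evalXi n f ∈ S := by
  refine ⟨⨅ τ : Equiv.Perm (Fin n), AlgHom.equalizer (Phi τ) (AlgHom.id ℚ (Bn n)), ?_, ?_⟩
  · ext x
    simp only [SetLike.mem_coe, Set.mem_setOf_eq, Algebra.mem_iInf, AlgHom.mem_equalizer,
      AlgHom.id_apply]
    exact forall_congr' fun τ => ⟨fun h => congrArg MonoidAlgebra.coeff h,
      fun h => congrArg MonoidAlgebra.ofCoeff h⟩
  · intro f hf
    have hfix : ∀ τ : Equiv.Perm (Fin n), Phi τ (evalXi n f) = evalXi n f := by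
      cases n with
      | zero =>
        intro τ
        have hτ : τ = 1 := Subsingleton.elim τ 1
        rw [hτ, Phi_one, AlgHom.id_apply]
      | succ m =>
        intro τ
        let M : Submonoid (Equiv.Perm (Fin (m+1))) :=
          { carrier := {τ | Phi τ (evalXi (m+1) f) = evalXi (m+1) f}
            one_mem' := by
              simp only [Set.mem_setOf_eq, Phi_one, AlgHom.id_apply]
            mul_mem' := by
              intro σ τ hσ hτ
              simp only [Set.mem_setOf_eq] at hσ hτ ⊢
              rw [Phi_mul, hτ, hσ] }
        have hle : (⊤ : Submonoid (Equiv.Perm (Fin (m+1)))) ≤ M := by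
          rw [← Equiv.Perm.mclosure_swap_castSucc_succ m]
          refine Submonoid.closure_le.mpr ?_
          rintro _ ⟨k, rfl⟩
          exact Phi_swap_evalXi k f hf
        exact hle (Submonoid.mem_top τ)
    rw [Algebra.mem_iInf]
    intro τ
    rw [AlgHom.mem_equalizer, AlgHom.id_apply]
    exact hfix τ
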